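/- Let G be a finite simple graph with m edges and minimum degree δ(G) ≥ 2, and let U be its Grover transition matrix. Then J₀ · U⁺ · J₀ = (U⁺)ᵀ, where J₀ is the arc-inversion matrix. -/

import Mathlib

open Matrix SimpleGraph

variable {V : Type*} [Fintype V] [DecidableEq V]

/-- The Grover transition matrix `U` of a graph `G`, indexed by darts (arcs):
`U e f = 2/deg(t(f)) - 1` if `f = e⁻¹`, `U e f = 2/deg(t(f))` if `t(f) = o(e)` and
`f ≠ e⁻¹`, and `0` otherwise.  (When `t(f) = o(e)` we have `deg (t f) = deg (o e)`.) -/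
noncomputable def grover (G : SimpleGraph V) [DecidableRel G.Adj] :
    Matrix G.Dart G.Dart ℝ := fun e f =>
  if f = e.symm then 2 / (G.degree e.toProd.1) - 1
  else if f.toProd.2 = e.toProd.1 then 2 / (G.degree e.toProd.1) else 0

/-- The positive support of a real square matrix. -/
noncomputable def posSupp {α : Type*} (M : Matrix α α ℝ) : Matrix α α ℝ :=
  fun i j => if 0 < M i j then 1 else 0

/-- The matrix `B` with `B e f = 1` iff `t(e) = o(f)`. -/
def Bmat (G : SimpleGraph V) [DecidableRel G.Adj] : Matrix G.Dart G.Dart ℝ :=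
  fun e f => if e.toProd.2 = f.toProd.1 then 1 else 0

/-- The arc-inversion matrix `J₀` with `(J₀) e f = 1` iff `f = e⁻¹`. -/
def J0 (G : SimpleGraph V) [DecidableRel G.Adj] : Matrix G.Dart G.Dart ℝ :=
  fun e f => if f = e.symm then 1 else 0

/-- The diagonal degree matrix of `G`. -/
noncomputable def degMat (G : SimpleGraph V) [DecidableRel G.Adj] : Matrix V V ℝ :=
  Matrix.diagonal fun v => (G.degree v : ℝ)

/-- if `δ(G) ≥ 2` then `J₀ U⁺ J₀ = (U⁺)ᵀ`. -/
theorem J0_posSupp_grover_J0 (G : SimpleGraph V) [DecidableRel G.Adj]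
    (hδ : ∀ v : V, 2 ≤ G.degree v) :
    J0 G * posSupp (grover G) * J0 G = (posSupp (grover G))ᵀ := by
  ext e f
  have hJ : ∀ M : Matrix G.Dart G.Dart ℝ, (J0 G * M * J0 G) e f = M e.symm f.symm := by
    intro M
    simp only [Matrix.mul_apply, J0, ite_mul, mul_ite, one_mul, mul_one, zero_mul, mul_zero]
    have hc : ∀ g x : G.Dart, (g = x.symm) ↔ (x = g.symm) := by
      intro g x; constructor <;> rintro rfl <;> simp
    simp [hc, Finset.sum_ite_eq']
  rw [hJ]
  have key : grover G e.symm f.symm = grover G f e := by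
    simp only [grover, Dart.symm_symm, Dart.symm_toProd, Prod.fst_swap, Prod.snd_swap]
    by_cases h1 : e = f.symm
    · subst h1
      simp [Dart.symm_toProd]
      rfl
    · have h1' : ¬ f.symm = e := fun h => h1 h.symm
      rw [if_neg h1', if_neg h1]
      by_cases h2 : f.toProd.1 = e.toProd.2
      · rw [if_pos h2, if_pos h2.symm, h2]
        rfl
      · rw [if_neg h2, if_neg (fun h => h2 h.symm)]
  simp only [Matrix.transpose_apply, posSupp, key]
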